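/- In the full sharing scenario with frequency-selective fading, no noise, and α = 4, the coverage probability is p(θ) = Σ_{k=1}^N C(N,k)(−1)^{k+1} / (1 + Σ_{l=1}^k C(k,l)(−1)^{l+1} 𝔷(θ,4,l)), where 𝔷(θ,4,l) = (2θ^l/(4l−2))·₂F₁(l, l−1/2; l+1/2; −θ). -/

import Mathlib

open Real MeasureTheory

noncomputable def hyp2F1 (a b c z : ℝ) : ℝ :=
  (Real.Gamma c / (Real.Gamma b * Real.Gamma (c - b))) *
    ∫ t in Set.Ioo (0 : ℝ) 1, t ^ (b - 1) * (1 - t) ^ (c - b - 1) * (1 - z * t) ^ (-a)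

/-- `𝔷(θ,4,l) = (2θ^l/(4l−2))·₂F₁(l, l−1/2; l+1/2; −θ)`. -/
noncomputable def zFun4 (θ : ℝ) (l : ℕ) : ℝ :=
  2 * θ ^ l / (4 * l - 2) * hyp2F1 l ((l : ℝ) - 1 / 2) ((l : ℝ) + 1 / 2) (-θ)

lemma zFun4_eq {θ : ℝ} (hθ : 0 ≤ θ) {l : ℕ} (hl : 1 ≤ l) :
    zFun4 θ l = ∫ t in Set.Ioo (0:ℝ) 1,
      (1/2) * t ^ (-(3:ℝ)/2) * (θ*t/(1+θ*t))^l := by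
  have hl' : (1:ℝ) ≤ (l:ℕ) := by exact_mod_cast hl
  have hΓpos : 0 < Real.Gamma ((l:ℝ) - 1/2) := Real.Gamma_pos_of_pos (by nlinarith)
  have hg : Real.Gamma ((l:ℝ) + 1/2) = ((l:ℝ) - 1/2) * Real.Gamma ((l:ℝ) - 1/2) := by
    have h := Real.Gamma_add_one (s := (l:ℝ) - 1/2) (by nlinarith)
    rw [show (l:ℝ) + 1/2 = ((l:ℝ) - 1/2) + 1 by ring, h]
  rw [zFun4, hyp2F1, hg]
  have hne : (4*(l:ℝ)-2) ≠ 0 := by nlinarith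
  rw [show 2 * θ ^ l / (4 * (l:ℝ) - 2) *
      ((((l:ℝ) - 1/2) * Real.Gamma ((l:ℝ) - 1/2) /
        (Real.Gamma ((l:ℝ) - 1/2) * Real.Gamma (((l:ℝ) + 1/2) - ((l:ℝ) - 1/2)))) *
       ∫ t in Set.Ioo (0:ℝ) 1, t ^ (((l:ℝ) - 1/2) - 1) *
          (1 - t) ^ (((l:ℝ) + 1/2) - ((l:ℝ) - 1/2) - 1) * (1 - (-θ) * t) ^ (-(l:ℝ)))
      = (θ ^ l / 2) *
       ∫ t in Set.Ioo (0:ℝ) 1, t ^ (((l:ℝ) - 1/2) - 1) *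
          (1 - t) ^ (((l:ℝ) + 1/2) - ((l:ℝ) - 1/2) - 1) * (1 - (-θ) * t) ^ (-(l:ℝ))
      from by
        rw [show ((l:ℝ) + 1/2) - ((l:ℝ) - 1/2) = 1 by ring, Real.Gamma_one,
          ← mul_assoc]
        congr 1
        rw [mul_one, mul_div_cancel_right₀ _ hΓpos.ne']
        field_simp [hne]
        ring]
  rw [← MeasureTheory.integral_const_mul]
  apply MeasureTheory.setIntegral_congr_fun measurableSet_Ioo
  intro t ht
  dsimp only
  have ht0 : 0 < t := ht.1
  have hd : 0 < 1 + θ * t := by nlinarith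
  have e1 : (1 - (-θ) * t) = 1 + θ * t := by ring
  have e2 : ((l:ℝ) + 1/2) - ((l:ℝ) - 1/2) - 1 = 0 := by ring
  have e3 : ((l:ℝ) - 1/2) - 1 = (l:ℝ) + (-(3:ℝ)/2) := by ring
  rw [e1, e2, e3, Real.rpow_zero, Real.rpow_add ht0, Real.rpow_natCast,
    Real.rpow_neg hd.le, Real.rpow_natCast, div_pow, mul_pow]
  field_simp

lemma integrable_f {θ : ℝ} (hθ : 0 ≤ θ) {l : ℕ} (hl : 1 ≤ l) :
    IntegrableOn (fun t : ℝ => (1/2) * t ^ (-(3:ℝ)/2) * (θ*t/(1+θ*t))^l)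
      (Set.Ioo (0:ℝ) 1) := by
  have hbase : IntegrableOn (fun t : ℝ => θ^l/2 * t ^ (-(1:ℝ)/2)) (Set.Ioo (0:ℝ) 1) := by
    apply Integrable.const_mul
    have := intervalIntegral.intervalIntegrable_rpow' (a := 0) (b := 1)
      (r := -(1:ℝ)/2) (by norm_num)
    rw [intervalIntegrable_iff_integrableOn_Ioo_of_le (by norm_num)] at this
    exact this
  apply Integrable.mono hbase
  · apply Measurable.aestronglyMeasurable
    fun_prop
  · rw [ae_restrict_iff' measurableSet_Ioo]
    filter_upwards with t ht'
    have ht0 : 0 < t := ht'.1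
    have hd : 0 < 1 + θ * t := by nlinarith
    have hg0 : 0 ≤ θ*t/(1+θ*t) := by positivity
    have hgle : θ*t/(1+θ*t) ≤ θ*t := div_le_self (by positivity) (by nlinarith)
    have h1 : (θ*t/(1+θ*t))^l ≤ (θ*t)^l := pow_le_pow_left₀ hg0 hgle l
    have h2 : t ^ (-(3:ℝ)/2) * t^l ≤ t ^ (-(1:ℝ)/2) := by
      rw [← Real.rpow_natCast t l, ← Real.rpow_add ht0]
      apply Real.rpow_le_rpow_of_exponent_ge ht0 ht'.2.le
      have : (1:ℝ) ≤ l := by exact_mod_cast hl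
      linarith
    rw [Real.norm_eq_abs, Real.norm_eq_abs, abs_of_nonneg (by positivity),
      abs_of_nonneg (by positivity)]
    calc (1:ℝ)/2 * t ^ (-(3:ℝ)/2) * (θ*t/(1+θ*t))^l
        ≤ 1/2 * t ^ (-(3:ℝ)/2) * (θ*t)^l := by
          apply mul_le_mul_of_nonneg_left h1 (by positivity)
      _ = θ^l/2 * (t ^ (-(3:ℝ)/2) * t^l) := by rw [mul_pow]; ring
      _ ≤ θ^l/2 * t ^ (-(1:ℝ)/2) := by
          apply mul_le_mul_of_nonneg_left h2 (by positivity)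

lemma binom_sum (x : ℝ) (k : ℕ) :
    ∑ l ∈ Finset.Icc 1 k, (k.choose l : ℝ) * (-1)^(l+1) * x^l = 1 - (1-x)^k := by
  have h0 : Finset.Icc 1 k = Finset.range (k+1) \ {0} := by
    ext l
    simp [Nat.lt_succ_iff, Nat.one_le_iff_ne_zero, and_comm]
  rw [h0, Finset.sum_sdiff_eq_sub (by simp)]
  have h1 : ∑ l ∈ Finset.range (k+1), (k.choose l : ℝ) * (-1)^(l+1) * x^l
      = -(1-x)^k := by
    have h2 := add_pow (-x) 1 k
    rw [show -x + 1 = 1 - x by ring] at h2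
    rw [show -(1-x)^k = -∑ l ∈ Finset.range (k+1), (-x)^l * 1^(k-l) * (k.choose l : ℝ)
      from by rw [← h2], ← Finset.sum_neg_distrib]
    apply Finset.sum_congr rfl
    intro l _
    rw [pow_succ, neg_pow, one_pow]
    ring
  rw [h1]
  simp only [Finset.sum_singleton, Nat.choose_zero_right, pow_zero, pow_one,
    Nat.cast_one, mul_one, one_mul]
  ring

lemma sum_z_nonneg {θ : ℝ} (hθ : 0 ≤ θ) (k : ℕ) :
    0 ≤ ∑ l ∈ Finset.Icc 1 k, (k.choose l : ℝ) * (-1)^(l+1) * zFun4 θ l := by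
  have hrw : ∀ l ∈ Finset.Icc 1 k,
      (k.choose l : ℝ) * (-1)^(l+1) * zFun4 θ l
      = ∫ t in Set.Ioo (0:ℝ) 1,
          (k.choose l : ℝ) * (-1)^(l+1) * ((1/2) * t ^ (-(3:ℝ)/2) * (θ*t/(1+θ*t))^l) := by
    intro l hli
    rw [zFun4_eq hθ (Finset.mem_Icc.mp hli).1, ← MeasureTheory.integral_const_mul]
  rw [Finset.sum_congr rfl hrw, ← MeasureTheory.integral_finset_sum]
  · apply MeasureTheory.setIntegral_nonneg measurableSet_Ioo
    intro t ht
    have ht0 : 0 < t := ht.1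
    have hd : 0 < 1 + θ * t := by nlinarith
    have hg0 : 0 ≤ θ*t/(1+θ*t) := by positivity
    have hg1 : θ*t/(1+θ*t) ≤ 1 := by
      rw [div_le_one hd]; nlinarith
    have : ∑ l ∈ Finset.Icc 1 k, (k.choose l : ℝ) * (-1)^(l+1) *
        ((1/2) * t ^ (-(3:ℝ)/2) * (θ*t/(1+θ*t))^l)
        = (1/2) * t ^ (-(3:ℝ)/2) * (1 - (1 - θ*t/(1+θ*t))^k) := by
      rw [← binom_sum (θ*t/(1+θ*t)) k, Finset.mul_sum]
      apply Finset.sum_congr rfl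
      intro l _
      ring
    rw [this]
    have hle1 : (1 - θ*t/(1+θ*t))^k ≤ 1 := pow_le_one₀ (by linarith) (by linarith)
    exact mul_nonneg (by positivity) (by linarith)
  · intro l hli
    exact (integrable_f hθ (Finset.mem_Icc.mp hli).1).const_mul _

/-- Full sharing with frequency-selective fading (no noise, `α = 4`): the coverage
probability equals
`Σ_{k=1}^N C(N,k)(−1)^{k+1} / (1 + Σ_{l=1}^k C(k,l)(−1)^{l+1} 𝔷(θ,4,l))`. -/
theorem full_sharing_freq_selective_coverage (N : ℕ) (hN : 1 ≤ N) (lam θ : ℝ)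
    (hlam : 0 < lam) (hθ : 0 ≤ θ) :
    (π * lam * ∑ k ∈ Finset.Icc 1 N, (N.choose k : ℝ) * (-1) ^ (k + 1) *
        ∫ r in Set.Ioi (0 : ℝ),
          exp (-π * r * lam *
            (1 + ∑ l ∈ Finset.Icc 1 k, (k.choose l : ℝ) * (-1) ^ (l + 1) * zFun4 θ l))) =
      ∑ k ∈ Finset.Icc 1 N, (N.choose k : ℝ) * (-1) ^ (k + 1) /
        (1 + ∑ l ∈ Finset.Icc 1 k, (k.choose l : ℝ) * (-1) ^ (l + 1) * zFun4 θ l) := by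
  rw [Finset.mul_sum]
  apply Finset.sum_congr rfl
  intro k _
  set C := 1 + ∑ l ∈ Finset.Icc 1 k, (k.choose l : ℝ) * (-1) ^ (l + 1) * zFun4 θ l with hC
  have hCpos : 0 < C := by
    have := sum_z_nonneg hθ k
    rw [hC]; linarith
  have hb : 0 < π * lam * C := by positivity
  have hint : (∫ r in Set.Ioi (0:ℝ), exp (-π * r * lam * C)) = (π * lam * C)⁻¹ := by
    have e : ∀ r : ℝ, -π * r * lam * C = -(π * lam * C) * r ^ (1:ℝ) := by
      intro r; rw [Real.rpow_one]; ring
    simp_rw [e]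
    rw [integral_exp_neg_mul_rpow one_pos hb]
    rw [show (-1:ℝ)/1 = -1 by norm_num, Real.rpow_neg_one,
      show (1:ℝ)/1 + 1 = 2 by norm_num, Real.Gamma_two, mul_one]
  rw [hint]
  field_simp
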